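/- Let (Ω, ℱ, P) be a probability space and let U : (0,∞) → ℝ be continuously differentiable, strictly increasing and strictly concave, with U'(0+) = +∞, U'(∞) = 0 and limsup_{x→∞} x U'(x)/U(x) < 1; extend U to 0 by U(0) = lim_{x↓0} U(x) ∈ [−∞, ∞). Let D be a convex set of nonnegative random variables such that E[U(W)] is well-defined in [−∞, +∞] for every W ∈ D, let α > 0 with U(α) > −∞, and suppose some V* ∈ D satisfies E[U(V*)] = sup_{W∈D} E[U(W)] < ∞. Then the set C = { V : V is a nonnegative random variable with V + α ∈ D } is bounded in probability. -/

import Mathlib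

set_option maxHeartbeats 2000000


open MeasureTheory Set Filter Topology ENNReal

/-- The positive part of an extended real number, as an element of `ℝ≥0∞`. -/
noncomputable def erealPosPart (x : EReal) : ℝ≥0∞ :=
  if x = ⊤ then ⊤ else ENNReal.ofReal x.toReal

/-- The utility function `U : (0,∞) → ℝ` extended to `0` by the (possibly infinite)
value `U₀ ∈ [−∞, ∞)`. -/
noncomputable def utilAt (U : ℝ → ℝ) (U₀ : EReal) (x : ℝ) : EReal :=
  if x = 0 then U₀ else (U x : EReal)

/-- The expected utility `E[U(W)] ∈ [−∞, +∞]` of a nonnegative random variable `W`,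
defined as the difference of the integrals of the positive and negative parts. -/
noncomputable def expUtil {Ω : Type*} [MeasurableSpace Ω] (P : Measure Ω)
    (U : ℝ → ℝ) (U₀ : EReal) (W : Ω → ℝ) : EReal :=
  ((∫⁻ ω, erealPosPart (utilAt U U₀ (W ω)) ∂P : ℝ≥0∞) : EReal)
    - ((∫⁻ ω, erealPosPart (-(utilAt U U₀ (W ω))) ∂P : ℝ≥0∞) : EReal)

/-- `E[U(W)]` is well-defined in `[−∞, +∞]`: the positive part or the negative part of
`U(W)` has finite integral. -/
def ExpUtilWellDef {Ω : Type*} [MeasurableSpace Ω] (P : Measure Ω)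
    (U : ℝ → ℝ) (U₀ : EReal) (W : Ω → ℝ) : Prop :=
  (∫⁻ ω, erealPosPart (utilAt U U₀ (W ω)) ∂P) ≠ ⊤
    ∨ (∫⁻ ω, erealPosPart (-(utilAt U U₀ (W ω))) ∂P) ≠ ⊤

/-! ### Auxiliary lemmas on concave differentiable functions -/

section UAnalysis
variable {U U' : ℝ → ℝ}

private lemma bip_slope_left (hconc : ConcaveOn ℝ (Set.Ioi 0) U)
    {x y z : ℝ} (hx : 0 < x) (hy : 0 < y) (hxy : x < y) (hz : z ∈ Set.Ioo x y) :
    (U y - U x) / (y - x) ≤ (U z - U x) / (z - x) := by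
  obtain ⟨hz1, hz2⟩ := hz
  have hyx : (0:ℝ) < y - x := by linarith
  have key := hconc.2 (Set.mem_Ioi.2 hx) (Set.mem_Ioi.2 hy)
    (show 0 ≤ (y - z)/(y - x) from div_nonneg (by linarith) hyx.le)
    (show 0 ≤ (z - x)/(y - x) from div_nonneg (by linarith) hyx.le)
    (show (y - z)/(y - x) + (z - x)/(y - x) = 1 by field_simp; ring)
  simp only [smul_eq_mul] at key
  rw [show (y - z)/(y - x) * x + (z - x)/(y - x) * y = z by field_simp; ring] at key
  have key2 : (y - z) * U x + (z - x) * U y ≤ (y - x) * U z := by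
    have heq : (y - x) * ((y - z)/(y - x) * U x + (z - x)/(y - x) * U y)
        = (y - z) * U x + (z - x) * U y := by field_simp
    nlinarith [mul_le_mul_of_nonneg_left key hyx.le]
  rw [div_le_div_iff₀ hyx (by linarith)]
  nlinarith

private lemma bip_slope_right (hconc : ConcaveOn ℝ (Set.Ioi 0) U)
    {x y z : ℝ} (hx : 0 < x) (hy : 0 < y) (hxy : y < x) (hz : z ∈ Set.Ioo y x) :
    (U x - U z) / (x - z) ≤ (U x - U y) / (x - y) := by
  obtain ⟨hz1, hz2⟩ := hz
  have hyx : (0:ℝ) < x - y := by linarith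
  have key := hconc.2 (Set.mem_Ioi.2 hy) (Set.mem_Ioi.2 hx)
    (show 0 ≤ (x - z)/(x - y) from div_nonneg (by linarith) hyx.le)
    (show 0 ≤ (z - y)/(x - y) from div_nonneg (by linarith) hyx.le)
    (show (x - z)/(x - y) + (z - y)/(x - y) = 1 by field_simp; ring)
  simp only [smul_eq_mul] at key
  rw [show (x - z)/(x - y) * y + (z - y)/(x - y) * x = z by field_simp; ring] at key
  have key2 : (x - z) * U y + (z - y) * U x ≤ (x - y) * U z := by
    have heq : (x - y) * ((x - z)/(x - y) * U y + (z - y)/(x - y) * U x)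
        = (x - z) * U y + (z - y) * U x := by field_simp
    nlinarith [mul_le_mul_of_nonneg_left key hyx.le]
  rw [div_le_div_iff₀ (by linarith) hyx]
  nlinarith

/-- Tangent line inequality for a concave differentiable function. -/
private lemma bip_tangent_le (hderiv : ∀ x ∈ Set.Ioi (0:ℝ), HasDerivAt U (U' x) x)
    (hconc : ConcaveOn ℝ (Set.Ioi 0) U)
    {x y : ℝ} (hx : 0 < x) (hy : 0 < y) :
    U y ≤ U x + U' x * (y - x) := by
  have hslope : Tendsto (slope U x) (𝓝[≠] x) (𝓝 (U' x)) :=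
    hasDerivAt_iff_tendsto_slope.1 (hderiv x hx)
  rcases lt_trichotomy x y with h | rfl | h
  · have ht : Tendsto (slope U x) (𝓝[>] x) (𝓝 (U' x)) :=
      hslope.mono_left (nhdsWithin_mono x fun z hz => ne_of_gt hz)
    have hev : ∀ᶠ z in 𝓝[>] x, (U y - U x) / (y - x) ≤ slope U x z := by
      filter_upwards [Ioo_mem_nhdsGT_of_mem ⟨le_refl x, h⟩] with z hz
      rw [slope_def_field]
      exact bip_slope_left hconc hx hy h hz
    have hle : (U y - U x) / (y - x) ≤ U' x := ge_of_tendsto ht hev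
    have hxy : (0:ℝ) < y - x := by linarith
    rw [div_le_iff₀ hxy] at hle
    linarith
  · simp
  · have ht : Tendsto (slope U x) (𝓝[<] x) (𝓝 (U' x)) :=
      hslope.mono_left (nhdsWithin_mono x fun z hz => ne_of_lt hz)
    have hev : ∀ᶠ z in 𝓝[<] x, slope U x z ≤ (U x - U y) / (x - y) := by
      filter_upwards [Ioo_mem_nhdsLT_of_mem (⟨h, le_refl x⟩ : x ∈ Set.Ioc y x)] with z hz
      have hz0 : 0 < z := lt_trans hy hz.1
      have h2 : (U x - U z) / (x - z) ≤ (U x - U y) / (x - y) :=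
        bip_slope_right hconc hx hy h hz
      rw [slope_def_field]
      calc (U z - U x) / (z - x) = (U x - U z) / (x - z) := by
            rw [← neg_div_neg_eq]; ring_nf
        _ ≤ _ := h2
    have hle : U' x ≤ (U x - U y) / (x - y) := le_of_tendsto ht hev
    have hxy : (0:ℝ) < x - y := by linarith
    rw [le_div_iff₀ hxy] at hle
    linarith

private lemma bip_Up_anti (hderiv : ∀ x ∈ Set.Ioi (0:ℝ), HasDerivAt U (U' x) x)
    (hconc : ConcaveOn ℝ (Set.Ioi 0) U)
    {x y : ℝ} (hx : 0 < x) (hy : 0 < y) (hxy : x ≤ y) : U' y ≤ U' x := by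
  have h1 := bip_tangent_le hderiv hconc hx hy
  have h2 := bip_tangent_le hderiv hconc hy hx
  rcases eq_or_lt_of_le hxy with rfl | h
  · exact le_refl _
  · nlinarith [sub_pos.2 h]

private lemma bip_Up_pos (hderiv : ∀ x ∈ Set.Ioi (0:ℝ), HasDerivAt U (U' x) x)
    (hconc : ConcaveOn ℝ (Set.Ioi 0) U) (hmono : StrictMonoOn U (Set.Ioi 0))
    {x : ℝ} (hx : 0 < x) : 0 < U' x := by
  have h1 := bip_tangent_le hderiv hconc hx (by linarith : (0:ℝ) < x + 1)
  have h2 := hmono (Set.mem_Ioi.2 hx) (Set.mem_Ioi.2 (by linarith : (0:ℝ) < x + 1))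
    (by linarith)
  nlinarith

private lemma bip_boundary_tangent (hderiv : ∀ x ∈ Set.Ioi (0:ℝ), HasDerivAt U (U' x) x)
    (hconc : ConcaveOn ℝ (Set.Ioi 0) U) {r : ℝ}
    (hU0r : Tendsto U (𝓝[>] (0:ℝ)) (𝓝 r)) {x : ℝ} (hx : 0 < x) :
    r ≤ U x - U' x * x := by
  have hev : ∀ᶠ y in 𝓝[>] (0:ℝ), U y ≤ U x + U' x * (y - x) := by
    filter_upwards [self_mem_nhdsWithin] with y hy
    exact bip_tangent_le hderiv hconc hx hy
  have hR : Tendsto (fun y : ℝ => U x + U' x * (y - x)) (𝓝[>] (0:ℝ))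
      (𝓝 (U x + U' x * (0 - x))) :=
    ((continuous_const.add (continuous_const.mul
      (continuous_id.sub continuous_const))).tendsto 0).mono_left nhdsWithin_le_nhds
  have := le_of_tendsto_of_tendsto hU0r hR hev
  linarith

private lemma bip_boundary_concave (hderiv : ∀ x ∈ Set.Ioi (0:ℝ), HasDerivAt U (U' x) x)
    (hconc : ConcaveOn ℝ (Set.Ioi 0) U) {r : ℝ}
    (hU0r : Tendsto U (𝓝[>] (0:ℝ)) (𝓝 r)) {t w : ℝ}
    (ht : 0 < t) (ht1 : t ≤ 1) (hw : 0 < w) :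
    (1 - t) * r + t * U w ≤ U (t * w) := by
  rcases eq_or_lt_of_le ht1 with rfl | h
  · simp
  · have hev : ∀ᶠ y in 𝓝[>] (0:ℝ), (1 - t) * U y + t * U w ≤ U ((1 - t) * y + t * w) := by
      filter_upwards [self_mem_nhdsWithin] with y hy
      have := hconc.2 (Set.mem_Ioi.2 (show (0:ℝ) < y from hy)) (Set.mem_Ioi.2 hw)
        (by linarith : (0:ℝ) ≤ 1 - t) ht.le (by ring)
      simpa [smul_eq_mul] using this
    have hL : Tendsto (fun y : ℝ => (1 - t) * U y + t * U w) (𝓝[>] (0:ℝ))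
        (𝓝 ((1 - t) * r + t * U w)) :=
      ((hU0r.const_mul _).add tendsto_const_nhds)
    have hR : Tendsto (fun y : ℝ => U ((1 - t) * y + t * w)) (𝓝[>] (0:ℝ))
        (𝓝 (U (t * w))) := by
      have hcont : ContinuousAt U (t * w) :=
        (hderiv _ (Set.mem_Ioi.2 (by positivity))).continuousAt
      have hinner : Tendsto (fun y : ℝ => (1 - t) * y + t * w) (𝓝[>] (0:ℝ)) (𝓝 (t * w)) := by
        have h0 : Tendsto (fun y : ℝ => (1 - t) * y + t * w) (𝓝 (0:ℝ))
            (𝓝 ((1 - t) * 0 + t * w)) :=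
          ((continuous_const.mul continuous_id).add continuous_const).tendsto 0
        simpa using h0.mono_left nhdsWithin_le_nhds
      exact hcont.tendsto.comp hinner
    exact le_of_tendsto_of_tendsto hL hR hev

end UAnalysis

/-! ### Auxiliary measure-theoretic lemmas -/

private lemma bip_nnnorm_split (x : ℝ) :
    (‖x‖₊ : ℝ≥0∞) = ENNReal.ofReal x + ENNReal.ofReal (-x) := by
  rcases le_total 0 x with h | h
  · rw [show ENNReal.ofReal (-x) = 0 from ENNReal.ofReal_of_nonpos (by linarith),
      add_zero, ← enorm_eq_nnnorm, Real.enorm_eq_ofReal h]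
  · rw [show ENNReal.ofReal x = 0 from ENNReal.ofReal_of_nonpos h, zero_add,
      ← nnnorm_neg x, ← enorm_eq_nnnorm, Real.enorm_eq_ofReal (by linarith)]

private lemma bip_ereal_coe_fin {a : ℝ≥0∞} (ha : a ≠ ⊤) :
    (a : EReal) = ((a.toReal : ℝ) : EReal) := by
  conv_lhs => rw [← ENNReal.ofReal_toReal ha]
  rw [EReal.coe_ennreal_ofReal, max_eq_left ENNReal.toReal_nonneg]

private lemma bip_ereal_sub_fin {a b : ℝ≥0∞} (ha : a ≠ ⊤) (hb : b ≠ ⊤) :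
    (a : EReal) - (b : EReal) = ((a.toReal - b.toReal : ℝ) : EReal) := by
  rw [bip_ereal_coe_fin ha, bip_ereal_coe_fin hb]
  exact (EReal.coe_sub _ _).symm

private lemma bip_ereal_sub_ne_bot {a b : ℝ≥0∞} (hb : b ≠ ⊤) :
    (a : EReal) - (b : EReal) ≠ ⊥ := by
  rcases eq_or_ne a ⊤ with rfl | ha
  · rw [EReal.coe_ennreal_top, bip_ereal_coe_fin hb, EReal.top_sub_coe]
    simp
  · rw [bip_ereal_sub_fin ha hb]
    exact EReal.coe_ne_bot _

private lemma bip_integrable_of_parts {Ω : Type*} [MeasurableSpace Ω] {P : Measure Ω}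
    {f : Ω → ℝ} (hf : Measurable f)
    (h1 : ∫⁻ ω, ENNReal.ofReal (f ω) ∂P ≠ ⊤)
    (h2 : ∫⁻ ω, ENNReal.ofReal (-f ω) ∂P ≠ ⊤) : Integrable f P := by
  refine ⟨hf.aestronglyMeasurable, ?_⟩
  rw [HasFiniteIntegral]
  calc ∫⁻ ω, (‖f ω‖₊ : ℝ≥0∞) ∂P
      = ∫⁻ ω, (ENNReal.ofReal (f ω) + ENNReal.ofReal (-f ω)) ∂P :=
        lintegral_congr fun ω => bip_nnnorm_split (f ω)
    _ = (∫⁻ ω, ENNReal.ofReal (f ω) ∂P) + ∫⁻ ω, ENNReal.ofReal (-f ω) ∂P :=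
        lintegral_add_left (hf.ennreal_ofReal) _
    _ < ⊤ := ENNReal.add_lt_top.2 ⟨h1.lt_top, h2.lt_top⟩

private lemma bip_repr_sub {Ω : Type*} [MeasurableSpace Ω] {P : Measure Ω}
    {f : Ω → ℝ} (hf : Measurable f)
    (h1 : ∫⁻ ω, ENNReal.ofReal (f ω) ∂P ≠ ⊤)
    (h2 : ∫⁻ ω, ENNReal.ofReal (-f ω) ∂P ≠ ⊤) :
    ((∫⁻ ω, ENNReal.ofReal (f ω) ∂P : ℝ≥0∞) : EReal)
      - ((∫⁻ ω, ENNReal.ofReal (-f ω) ∂P : ℝ≥0∞) : EReal)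
      = ((∫ ω, f ω ∂P : ℝ) : EReal) := by
  rw [bip_ereal_sub_fin h1 h2, EReal.coe_eq_coe_iff,
    integral_eq_lintegral_pos_part_sub_lintegral_neg_part (bip_integrable_of_parts hf h1 h2)]

/-- Let `U : (0,∞) → ℝ` be continuously differentiable, strictly
increasing and strictly concave, with `U'(0+) = +∞`, `U'(∞) = 0` and
`limsup_{x→∞} x U'(x)/U(x) < 1`; extend `U` to `0` by `U(0) = lim_{x↓0} U(x) ∈ [−∞, ∞)`.
Let `D` be a convex set of nonnegative random variables with well-defined expected
utilities, let `α > 0` with `U(α) > −∞`, and suppose some `V* ∈ D` satisfies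
`E[U(V*)] = sup_{W ∈ D} E[U(W)] < ∞`. Then the set
`C = { V : V nonnegative random variable with V + α ∈ D }` is bounded in probability. -/
theorem bounded_in_probability_of_optimizer
    {Ω : Type*} [MeasurableSpace Ω] (P : Measure Ω) [IsProbabilityMeasure P]
    (U U' : ℝ → ℝ) (U₀ : EReal)
    (hderiv : ∀ x ∈ Set.Ioi (0 : ℝ), HasDerivAt U (U' x) x)
    (hU'cont : ContinuousOn U' (Set.Ioi 0))
    (hmono : StrictMonoOn U (Set.Ioi 0))
    (hconc : StrictConcaveOn ℝ (Set.Ioi 0) U)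
    (hInada₀ : Tendsto U' (nhdsWithin 0 (Set.Ioi 0)) atTop)
    (hInadaTop : Tendsto U' atTop (nhds 0))
    (hRAE : Filter.limsup (fun x : ℝ => x * U' x / U x) atTop < 1)
    (hU₀ : Tendsto (fun x : ℝ => (U x : EReal)) (nhdsWithin 0 (Set.Ioi 0)) (nhds U₀))
    (hU₀ne : U₀ ≠ ⊤)
    (D : Set (Ω → ℝ)) (hD : Convex ℝ D)
    (hDmeas : ∀ W ∈ D, Measurable W) (hDnonneg : ∀ W ∈ D, ∀ ω, 0 ≤ W ω)
    (hDwd : ∀ W ∈ D, ExpUtilWellDef P U U₀ W)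
    (α : ℝ) (hα : 0 < α)
    (Vstar : Ω → ℝ) (hVD : Vstar ∈ D)
    (hopt : expUtil P U U₀ Vstar = ⨆ W ∈ D, expUtil P U U₀ W)
    (hfin : expUtil P U U₀ Vstar ≠ ⊤) :
    ∀ ε : ℝ, 0 < ε → ∃ M : ℝ, 0 < M ∧
      ∀ V : Ω → ℝ, (∀ ω, 0 ≤ V ω) → (fun ω => V ω + α) ∈ D →
        P {ω | M ≤ |V ω|} ≤ ENNReal.ofReal ε := by
  intro ε hε
  by_cases hC : ∃ V : Ω → ℝ, (∀ ω, 0 ≤ V ω) ∧ (fun ω => V ω + α) ∈ D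
  swap
  · exact ⟨1, one_pos, fun V h1 h2 => absurd ⟨V, h1, h2⟩ hC⟩
  obtain ⟨V₀, hV₀nn, hV₀D⟩ := hC
  have hcc : ConcaveOn ℝ (Set.Ioi 0) U := hconc.concaveOn
  have hUmono : ∀ {a b : ℝ}, 0 < a → a ≤ b → U a ≤ U b := fun {a b} ha hab =>
    hmono.monotoneOn (Set.mem_Ioi.2 ha) (Set.mem_Ioi.2 (lt_of_lt_of_le ha hab)) hab
  -- measurability of U ∘ W for W bounded below by a positive constant
  have hmeasU : ∀ (W : Ω → ℝ), Measurable W → ∀ c : ℝ, 0 < c → (∀ ω, c ≤ W ω) →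
      Measurable fun ω => U (W ω) := by
    intro W hW c hc hWc
    have hM : Monotone fun x : ℝ => U (max x c) := fun x y hxy =>
      hmono.monotoneOn (Set.mem_Ioi.2 (lt_max_of_lt_right hc))
        (Set.mem_Ioi.2 (lt_max_of_lt_right hc)) (max_le_max hxy le_rfl)
    have hWeq : (fun ω => U (W ω)) = fun ω => U (max (W ω) c) := by
      funext ω; rw [max_eq_left (hWc ω)]
    rw [hWeq]
    exact hM.measurable.comp hW
  -- pointwise values of the utility parts away from `0`
  have hptw : ∀ x : ℝ, x ≠ 0 →
      erealPosPart (utilAt U U₀ x) = ENNReal.ofReal (U x) ∧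
      erealPosPart (-(utilAt U U₀ x)) = ENNReal.ofReal (-(U x)) := by
    intro x hx
    rw [utilAt, if_neg hx]
    constructor
    · rw [erealPosPart, if_neg (EReal.coe_ne_top _), EReal.toReal_coe]
    · rw [← EReal.coe_neg, erealPosPart, if_neg (EReal.coe_ne_top _), EReal.toReal_coe]
  have hexp_eq : ∀ (W : Ω → ℝ) (c : ℝ), 0 < c → (∀ ω, c ≤ W ω) →
      expUtil P U U₀ W =
        ((∫⁻ ω, ENNReal.ofReal (U (W ω)) ∂P : ℝ≥0∞) : EReal)
          - ((∫⁻ ω, ENNReal.ofReal (-(U (W ω))) ∂P : ℝ≥0∞) : EReal) := by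
    intro W c hc hWc
    unfold expUtil
    rw [lintegral_congr fun ω => (hptw (W ω) (lt_of_lt_of_le hc (hWc ω)).ne').1,
      lintegral_congr fun ω => (hptw (W ω) (lt_of_lt_of_le hc (hWc ω)).ne').2]
  have hnegfin : ∀ (W : Ω → ℝ) (c : ℝ), 0 < c → (∀ ω, c ≤ W ω) →
      ∫⁻ ω, ENNReal.ofReal (-(U (W ω))) ∂P ≠ ⊤ := by
    intro W c hc hWc
    have hb : ∀ ω, ENNReal.ofReal (-(U (W ω))) ≤ ENNReal.ofReal |U c| := fun ω =>
      ENNReal.ofReal_le_ofReal (by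
        have h1 := hUmono hc (hWc ω); have h2 := neg_abs_le (U c); linarith)
    refine ne_top_of_le_ne_top ?_ (lintegral_mono hb)
    rw [lintegral_const, measure_univ, mul_one]
    exact ENNReal.ofReal_ne_top
  -- the optimum is a finite real number
  have hW₀c : ∀ ω, α ≤ V₀ ω + α := fun ω => le_add_of_nonneg_left (hV₀nn ω)
  have hW₀le : expUtil P U U₀ (fun ω => V₀ ω + α) ≤ expUtil P U U₀ Vstar := by
    rw [hopt]; exact le_biSup _ hV₀D
  have hW₀nb : expUtil P U U₀ (fun ω => V₀ ω + α) ≠ ⊥ := by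
    rw [hexp_eq _ α hα hW₀c]
    exact bip_ereal_sub_ne_bot (hnegfin _ α hα hW₀c)
  have hVs_nb : expUtil P U U₀ Vstar ≠ ⊥ := by
    intro h
    rw [h, le_bot_iff] at hW₀le
    exact hW₀nb hW₀le
  set A := ∫⁻ ω, erealPosPart (utilAt U U₀ (Vstar ω)) ∂P with hA_def
  set B := ∫⁻ ω, erealPosPart (-(utilAt U U₀ (Vstar ω))) ∂P with hB_def
  have hexpVs : expUtil P U U₀ Vstar = (A : EReal) - (B : EReal) := rfl
  have hVsm : Measurable Vstar := hDmeas _ hVD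
  have hVsnn := hDnonneg _ hVD
  have hB : B ≠ ⊤ := by
    intro h
    apply hVs_nb
    rw [hexpVs, h, EReal.coe_ennreal_top]
    exact EReal.sub_top _
  have hA : A ≠ ⊤ := by
    intro h
    apply hfin
    rw [hexpVs, h, EReal.coe_ennreal_top, bip_ereal_coe_fin hB, EReal.top_sub_coe]
  set r := U₀.toReal with hr_def
  have hU0r : U₀ = (r : EReal) → Tendsto U (𝓝[>] (0:ℝ)) (𝓝 r) := fun h =>
    EReal.tendsto_coe.1 (by rw [← h]; exact hU₀)
  set Gs : Ω → ℝ := fun ω => if Vstar ω = 0 then r else U (Vstar ω) with hGs_def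
  have hGs_meas : Measurable Gs := by
    apply measurable_of_tendsto_metrizable
      (f := fun (n : ℕ) ω => if Vstar ω = 0 then r else U (max (Vstar ω) (1/((n:ℝ)+1))))
    · intro n
      apply Measurable.ite (hVsm (measurableSet_singleton 0)) measurable_const
      have hM : Monotone fun x : ℝ => U (max x (1/((n:ℝ)+1))) := fun x y hxy =>
        hmono.monotoneOn (Set.mem_Ioi.2 (lt_max_of_lt_right (by positivity)))
          (Set.mem_Ioi.2 (lt_max_of_lt_right (by positivity))) (max_le_max hxy le_rfl)
      exact hM.measurable.comp hVsm
    · rw [tendsto_pi_nhds]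
      intro ω
      by_cases h0 : Vstar ω = 0
      · simp only [if_pos h0, hGs_def]
        exact tendsto_const_nhds
      · have ha : 0 < Vstar ω := lt_of_le_of_ne (hVsnn ω) (Ne.symm h0)
        have hev : ∀ᶠ n : ℕ in atTop, 1/((n:ℝ)+1) < Vstar ω :=
          tendsto_one_div_add_atTop_nhds_zero_nat.eventually_lt_const ha
        have hGsω : Gs ω = U (Vstar ω) := if_neg h0
        rw [hGsω]
        apply Tendsto.congr' _ tendsto_const_nhds
        filter_upwards [hev] with n hn
        rw [if_neg h0, max_eq_left hn.le]
  have hae0 : ∀ᵐ ω ∂P, Vstar ω ≠ 0 ∨ U₀ = (r : EReal) := by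
    rcases eq_or_ne U₀ ⊥ with hbot | hreal
    · have hnull : P {ω | Vstar ω = 0} = 0 := by
        by_contra hpos
        apply hB
        have hle : ∫⁻ ω, ({ω | Vstar ω = 0}).indicator (fun _ => (⊤:ℝ≥0∞)) ω ∂P ≤ B := by
          apply lintegral_mono
          intro ω
          by_cases h0 : Vstar ω = 0
          · rw [Set.indicator_of_mem (show ω ∈ {ω | Vstar ω = 0} from h0)]
            have hu0 : utilAt U U₀ (Vstar ω) = ⊥ := by rw [utilAt, if_pos h0, hbot]
            simp only [hu0, EReal.neg_bot]
            rw [erealPosPart, if_pos rfl]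
          · rw [Set.indicator_of_notMem (show ω ∉ {ω | Vstar ω = 0} from h0)]
            exact zero_le
        rw [lintegral_indicator (show MeasurableSet {ω | Vstar ω = 0} from hVsm (measurableSet_singleton 0)), setLIntegral_const] at hle
        rw [ENNReal.top_mul hpos] at hle
        exact top_le_iff.1 hle
      have hae : ∀ᵐ ω ∂P, Vstar ω ≠ 0 := by
        rw [ae_iff]
        simpa [not_not] using hnull
      exact hae.mono fun ω h => Or.inl h
    · exact Filter.Eventually.of_forall fun ω => Or.inr (EReal.coe_toReal hU₀ne hreal).symm
  have haeGs_pos : (fun ω => erealPosPart (utilAt U U₀ (Vstar ω)))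
      =ᵐ[P] fun ω => ENNReal.ofReal (Gs ω) := by
    filter_upwards [hae0] with ω h
    by_cases h0 : Vstar ω = 0
    · have hr' : U₀ = (r : EReal) := h.resolve_left (not_not_intro h0)
      have hGsω : Gs ω = r := if_pos h0
      rw [utilAt, if_pos h0, hr', hGsω, erealPosPart, if_neg (EReal.coe_ne_top _),
        EReal.toReal_coe]
    · rw [(hptw _ h0).1]
      have hGsω : Gs ω = U (Vstar ω) := if_neg h0
      rw [hGsω]
  have haeGs_neg : (fun ω => erealPosPart (-(utilAt U U₀ (Vstar ω))))
      =ᵐ[P] fun ω => ENNReal.ofReal (-Gs ω) := by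
    filter_upwards [hae0] with ω h
    by_cases h0 : Vstar ω = 0
    · have hr' : U₀ = (r : EReal) := h.resolve_left (not_not_intro h0)
      have hGsω : Gs ω = r := if_pos h0
      rw [utilAt, if_pos h0, hr', hGsω, ← EReal.coe_neg, erealPosPart,
        if_neg (EReal.coe_ne_top _), EReal.toReal_coe]
    · rw [(hptw _ h0).2]
      have hGsω : Gs ω = U (Vstar ω) := if_neg h0
      rw [hGsω]
  have hApos : A = ∫⁻ ω, ENNReal.ofReal (Gs ω) ∂P := hA_def.trans (lintegral_congr_ae haeGs_pos)
  have hBneg : B = ∫⁻ ω, ENNReal.ofReal (-Gs ω) ∂P := hB_def.trans (lintegral_congr_ae haeGs_neg)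
  have hA' : ∫⁻ ω, ENNReal.ofReal (Gs ω) ∂P ≠ ⊤ := hApos ▸ hA
  have hB' : ∫⁻ ω, ENNReal.ofReal (-Gs ω) ∂P ≠ ⊤ := hBneg ▸ hB
  have hGs_int : Integrable Gs P := bip_integrable_of_parts hGs_meas hA' hB'
  set u := ∫ ω, Gs ω ∂P with hu_def
  have hu : expUtil P U U₀ Vstar = (u : EReal) := by
    rw [hexpVs, hApos, hBneg]
    exact bip_repr_sub hGs_meas hA' hB'
  -- constants
  set g0 : Ω → ℝ := fun ω => max (Gs ω - U α) 0 with hg0_def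
  have hg0_meas : Measurable g0 := (hGs_meas.sub measurable_const).max measurable_const
  have hg0_int : Integrable g0 P := (hGs_int.sub (integrable_const _)).pos_part
  have hg0_nn : ∀ ω, 0 ≤ g0 ω := fun ω => le_max_right _ _
  set c₁ := ∫ ω, g0 ω ∂P with hc₁_def
  have hc₁nn : 0 ≤ c₁ := integral_nonneg hg0_nn
  -- choose K
  have hKex : ∃ n : ℕ, P {ω | (n:ℝ) < Vstar ω} ≤ ENNReal.ofReal (ε/2) := by
    have hsets : Tendsto (fun n : ℕ => P {ω | (n:ℝ) < Vstar ω}) atTop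
        (𝓝 (P (⋂ n : ℕ, {ω | (n:ℝ) < Vstar ω}))) := by
      apply tendsto_measure_iInter_atTop
      · exact fun n => (hVsm measurableSet_Ioi).nullMeasurableSet
      · intro m n hmn ω hω
        exact lt_of_le_of_lt (show (m:ℝ) ≤ (n:ℝ) from Nat.cast_le.mpr hmn) hω
      · exact ⟨0, measure_ne_top P _⟩
    have hempty : (⋂ n : ℕ, {ω | (n:ℝ) < Vstar ω}) = ∅ := by
      ext ω
      simp only [Set.mem_iInter, Set.mem_setOf_eq, Set.mem_empty_iff_false, iff_false, not_forall,
        not_lt]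
      obtain ⟨n, hn⟩ := exists_nat_gt (Vstar ω)
      exact ⟨n, hn.le⟩
    rw [hempty, measure_empty] at hsets
    have hlt := hsets.eventually_lt_const
      (show (0:ℝ≥0∞) < ENNReal.ofReal (ε/2) from ENNReal.ofReal_pos.2 (by linarith))
    obtain ⟨n, hn⟩ := hlt.exists
    exact ⟨n, hn.le⟩
  obtain ⟨n₀, hn₀⟩ := hKex
  set K : ℝ := (n₀ : ℝ) + 1 with hK_def
  have hK0 : 0 < K := by positivity
  have hPK : P {ω | K < Vstar ω} ≤ ENNReal.ofReal (ε/2) := by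
    refine le_trans (measure_mono ?_) hn₀
    intro ω hω
    rw [Set.mem_setOf_eq] at hω ⊢
    have hlt : (n₀:ℝ) < K := by rw [hK_def]; exact lt_add_one _
    exact lt_trans hlt hω
  set q := U' K with hq_def
  have hq : 0 < q := bip_Up_pos hderiv hcc hmono hK0
  set M : ℝ := K + 1 + (8*c₁ + 8)/(q*ε) with hM_def
  have hMK : K + 1 ≤ M := by
    have h1 : 0 ≤ (8*c₁+8)/(q*ε) := by positivity
    rw [hM_def]
    linarith
  have hM0 : 0 < M := by linarith
  set cM := q/2 * (M + α - K) with hcM_def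
  have hcM0 : 0 < cM := by
    have h1 : 0 < M + α - K := by linarith
    positivity
  have hcMge : (4*c₁+4)/ε ≤ cM := by
    have e1 : q/2 * ((8*c₁+8)/(q*ε)) = (4*c₁+4)/ε := by
      field_simp; ring
    calc (4*c₁+4)/ε = q/2 * ((8*c₁+8)/(q*ε)) := e1.symm
      _ ≤ q/2 * (M + α - K) := by
          apply mul_le_mul_of_nonneg_left _ (by positivity)
          rw [hM_def]; linarith
      _ = cM := rfl
  have hfinal_div : 2*c₁/cM ≤ ε/2 := by
    rw [div_le_iff₀ hcM0]
    have e2 : ε/2 * ((4*c₁+4)/ε) = 2*c₁+2 := by field_simp; ring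
    nlinarith [mul_le_mul_of_nonneg_left hcMge (show (0:ℝ) ≤ ε/2 by linarith)]
  refine ⟨M, hM0, ?_⟩
  intro V hVnn hVmem
  have hWc : ∀ ω, α ≤ V ω + α := fun ω => le_add_of_nonneg_left (hVnn ω)
  have hWm : Measurable fun ω => V ω + α := hDmeas _ hVmem
  have hVm : Measurable V := by
    have hVeq : V = fun ω => (V ω + α) - α := by funext ω; ring
    rw [hVeq]; exact hWm.sub measurable_const
  set S : Set Ω := {ω | Vstar ω ≤ K ∧ M ≤ V ω} with hS_def
  have hSm : MeasurableSet S := (hVsm measurableSet_Iic).inter (hVm measurableSet_Ici)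
  set tk : ℕ → ℝ := fun k => ((k:ℝ)+1)⁻¹ with htk_def
  have htk0 : ∀ k, 0 < tk k := fun k => by positivity
  have htk1 : ∀ k, tk k ≤ 1 := by
    intro k
    have h1 : (1:ℝ) ≤ (k:ℝ)+1 := le_add_of_nonneg_left (Nat.cast_nonneg k)
    show ((k:ℝ)+1)⁻¹ ≤ 1
    simpa using inv_anti₀ one_pos h1
  have htkinv : ∀ k : ℕ, ((k:ℝ)+1) * tk k = 1 := by
    intro k
    show ((k:ℝ)+1) * ((k:ℝ)+1)⁻¹ = 1
    exact mul_inv_cancel₀ (by positivity)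
  have htklim : Tendsto tk atTop (𝓝 0) := by
    have h := tendsto_one_div_add_atTop_nhds_zero_nat (𝕜 := ℝ)
    simp only [one_div] at h
    exact h
  set Xk : ℕ → Ω → ℝ := fun k ω => (1 - tk k) * Vstar ω + tk k * (V ω + α) with hXk_def
  have hXc : ∀ k ω, tk k * α ≤ Xk k ω := by
    intro k ω
    have h1 : 0 ≤ (1 - tk k) * Vstar ω := mul_nonneg (by linarith [htk1 k]) (hVsnn ω)
    have h2 : tk k * α ≤ tk k * (V ω + α) := mul_le_mul_of_nonneg_left (hWc ω) (htk0 k).le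
    simp only [hXk_def]
    linarith
  have hXcpos : ∀ k, 0 < tk k * α := fun k => by positivity
  have hXpos : ∀ k ω, 0 < Xk k ω := fun k ω => lt_of_lt_of_le (hXcpos k) (hXc k ω)
  have hXD : ∀ k, Xk k ∈ D := by
    intro k
    have hmem := hD hVD hVmem (by linarith [htk1 k] : (0:ℝ) ≤ 1 - tk k) (htk0 k).le (by ring)
    have heq : Xk k = (1 - tk k) • Vstar + tk k • fun ω => V ω + α := by
      funext ω
      simp [hXk_def, Pi.add_apply, Pi.smul_apply, smul_eq_mul]
    rw [heq]
    exact hmem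
  have hXexp_le : ∀ k, expUtil P U U₀ (Xk k) ≤ (u : EReal) := by
    intro k
    rw [← hu, hopt]
    exact le_biSup _ (hXD k)
  have hXm : ∀ k, Measurable (Xk k) := fun k =>
    ((hVsm.const_mul _).add ((hVm.add_const _).const_mul _))
  have hGk_meas : ∀ k, Measurable fun ω => U (Xk k ω) := fun k =>
    hmeasU _ (hXm k) (tk k * α) (hXcpos k) (hXc k)
  have hGk_negfin : ∀ k, ∫⁻ ω, ENNReal.ofReal (-(U (Xk k ω))) ∂P ≠ ⊤ :=
    fun k => hnegfin _ (tk k * α) (hXcpos k) (hXc k)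
  have hGk_posfin : ∀ k, ∫⁻ ω, ENNReal.ofReal (U (Xk k ω)) ∂P ≠ ⊤ := by
    intro k
    intro htop
    have hle := hXexp_le k
    rw [hexp_eq _ (tk k * α) (hXcpos k) (hXc k), htop, EReal.coe_ennreal_top,
      bip_ereal_coe_fin (hGk_negfin k), EReal.top_sub_coe] at hle
    exact absurd hle (not_le.2 (EReal.coe_lt_top u))
  have hGk_int : ∀ k, Integrable (fun ω => U (Xk k ω)) P :=
    fun k => bip_integrable_of_parts (hGk_meas k) (hGk_posfin k) (hGk_negfin k)
  have hGk_le : ∀ k, ∫ ω, U (Xk k ω) ∂P ≤ u := by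
    intro k
    have h1 := hXexp_le k
    rw [hexp_eq _ (tk k * α) (hXcpos k) (hXc k),
      bip_repr_sub (hGk_meas k) (hGk_posfin k) (hGk_negfin k)] at h1
    exact_mod_cast h1
  set Dk : ℕ → Ω → ℝ := fun k ω => ((k:ℝ)+1) * (U (Xk k ω) - Gs ω) with hDk_def
  have hDk_meas : ∀ k, Measurable (Dk k) := fun k => ((hGk_meas k).sub hGs_meas).const_mul _
  have hDk_int : ∀ k, Integrable (Dk k) P := fun k => ((hGk_int k).sub hGs_int).const_mul _
  have hDk_int_le : ∀ k, ∫ ω, Dk k ω ∂P ≤ 0 := by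
    intro k
    simp only [hDk_def]
    rw [MeasureTheory.integral_const_mul, integral_sub (hGk_int k) hGs_int]
    have h1 := hGk_le k
    have h2 : (0:ℝ) ≤ (k:ℝ)+1 := by positivity
    rw [← hu_def]
    nlinarith
  have hminor : ∀ᵐ ω ∂P, ∀ k, U α - Gs ω ≤ Dk k ω := by
    filter_upwards [hae0] with ω hω
    intro k
    have hw : α ≤ V ω + α := hWc ω
    have hw0 : 0 < V ω + α := lt_of_lt_of_le hα hw
    have hUw : U α ≤ U (V ω + α) := hUmono hα hw
    by_cases h0 : Vstar ω = 0
    · have hr' : U₀ = (r : EReal) := hω.resolve_left (not_not_intro h0)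
      have hGsω : Gs ω = r := if_pos h0
      have hb := bip_boundary_concave hderiv hcc (hU0r hr') (htk0 k) (htk1 k) hw0
      have hXeq : Xk k ω = tk k * (V ω + α) := by simp [hXk_def, h0]
      have step : tk k * (U (V ω + α) - r) ≤ U (Xk k ω) - r := by
        rw [hXeq]; linarith [hb]
      have step2 := mul_le_mul_of_nonneg_left step (show (0:ℝ) ≤ (k:ℝ)+1 by positivity)
      rw [← mul_assoc, htkinv k, one_mul] at step2
      simp only [hDk_def, hGsω]
      linarith
    · have ha : 0 < Vstar ω := lt_of_le_of_ne (hVsnn ω) (Ne.symm h0)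
      have hGsω : Gs ω = U (Vstar ω) := if_neg h0
      have hcomb := hcc.2 (Set.mem_Ioi.2 ha) (Set.mem_Ioi.2 hw0)
        (by linarith [htk1 k] : (0:ℝ) ≤ 1 - tk k) (htk0 k).le (by ring)
      simp only [smul_eq_mul] at hcomb
      have step : tk k * (U (V ω + α) - U (Vstar ω)) ≤ U (Xk k ω) - U (Vstar ω) := by
        simp only [hXk_def]
        nlinarith [hcomb]
      have step2 := mul_le_mul_of_nonneg_left step (show (0:ℝ) ≤ (k:ℝ)+1 by positivity)
      rw [← mul_assoc, htkinv k, one_mul] at step2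
      simp only [hDk_def, hGsω]
      linarith
  have hint_bound : ∀ k, ∫⁻ ω, ENNReal.ofReal (S.indicator (Dk k) ω + g0 ω) ∂P
      ≤ ENNReal.ofReal (2*c₁) := by
    intro k
    have hint : Integrable (fun ω => S.indicator (Dk k) ω + g0 ω) P :=
      ((hDk_int k).indicator hSm).add hg0_int
    have hnn : 0 ≤ᵐ[P] fun ω => S.indicator (Dk k) ω + g0 ω := by
      filter_upwards [hminor] with ω hm
      by_cases hωS : ω ∈ S
      · rw [Pi.zero_apply, Set.indicator_of_mem hωS]
        have h1 := hm k
        have h2 := le_max_left (Gs ω - U α) 0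
        simp only [hg0_def]
        linarith
      · rw [Pi.zero_apply, Set.indicator_of_notMem hωS, zero_add]
        exact hg0_nn ω
    rw [← ofReal_integral_eq_lintegral_ofReal hint hnn]
    apply ENNReal.ofReal_le_ofReal
    rw [integral_add ((hDk_int k).indicator hSm) hg0_int]
    have hsplit : S.indicator (Dk k) = fun ω => Dk k ω - Sᶜ.indicator (Dk k) ω := by
      funext ω
      by_cases hωS : ω ∈ S
      · rw [Set.indicator_of_mem hωS, Set.indicator_of_notMem (by simpa using hωS), sub_zero]
      · rw [Set.indicator_of_notMem hωS, Set.indicator_of_mem (Set.mem_compl hωS), sub_self]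
    have hcompl_ge : -c₁ ≤ ∫ ω, Sᶜ.indicator (Dk k) ω ∂P := by
      have hptle : (fun ω => -(g0 ω)) ≤ᵐ[P] Sᶜ.indicator (Dk k) := by
        filter_upwards [hminor] with ω hm
        by_cases hωS : ω ∈ Sᶜ
        · rw [Set.indicator_of_mem hωS]
          have h1 := hm k
          have h2 := le_max_left (Gs ω - U α) 0
          simp only [hg0_def]
          linarith
        · rw [Set.indicator_of_notMem hωS]
          have := hg0_nn ω
          linarith
      have hmle := integral_mono_ae hg0_int.neg ((hDk_int k).indicator hSm.compl) hptle
      simp only [Pi.neg_apply] at hmle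
      rw [integral_neg] at hmle
      have hc : ∫ ω, g0 ω ∂P = c₁ := hc₁_def.symm
      rw [hc] at hmle
      linarith [hmle]
    rw [hsplit, integral_sub (hDk_int k) ((hDk_int k).indicator hSm.compl)]
    have h1 := hDk_int_le k
    rw [← hc₁_def]
    linarith
  -- Fatou argument
  have hFatou : ENNReal.ofReal cM * P S ≤ ENNReal.ofReal (2*c₁) := by
    have hF_meas : ∀ k, Measurable fun ω => ENNReal.ofReal (S.indicator (Dk k) ω + g0 ω) :=
      fun k => (((hDk_meas k).indicator hSm).add hg0_meas).ennreal_ofReal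
    have hmain : ∫⁻ ω, S.indicator (fun _ => ENNReal.ofReal cM) ω ∂P
        ≤ ∫⁻ ω, liminf (fun k => ENNReal.ofReal (S.indicator (Dk k) ω + g0 ω)) atTop ∂P := by
      apply lintegral_mono_ae
      filter_upwards [hae0] with ω hω
      by_cases hωS : ω ∈ S
      · rw [Set.indicator_of_mem hωS]
        refine le_liminf_of_le (by isBoundedDefault) ?_
        have hev : ∀ᶠ k in atTop, cM ≤ Dk k ω := by
          obtain ⟨hωK, hωM⟩ := hωS
          have hw0 : 0 < V ω + α := lt_of_lt_of_le hα (hWc ω)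
          have hwM : M + α ≤ V ω + α := by linarith
          have hMα : 0 < M + α := by linarith
          by_cases h0 : Vstar ω = 0
          · have hr' : U₀ = (r : EReal) := hω.resolve_left (not_not_intro h0)
            have hGsω : Gs ω = r := if_pos h0
            have hXeq : ∀ k, Xk k ω = tk k * (V ω + α) := fun k => by simp [hXk_def, h0]
            have htendU' : Tendsto (fun k => U' (tk k * (V ω + α))) atTop atTop := by
              apply hInada₀.comp
              apply tendsto_nhdsWithin_of_tendsto_nhds_of_eventually_within
              · have := htklim.mul_const (V ω + α)
                simpa using this
              · exact Filter.Eventually.of_forall fun k => Set.mem_Ioi.2 (by positivity)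
            have hq2 : ∀ᶠ k in atTop, cM / (M + α) ≤ U' (tk k * (V ω + α)) :=
              htendU'.eventually_ge_atTop _
            filter_upwards [hq2] with k hk
            have hxpos : 0 < tk k * (V ω + α) := by positivity
            have htan := bip_boundary_tangent hderiv hcc (hU0r hr') hxpos
            have hU'pos : 0 < U' (tk k * (V ω + α)) := bip_Up_pos hderiv hcc hmono hxpos
            have step : U' (tk k * (V ω + α)) * (tk k * (V ω + α)) ≤ U (tk k * (V ω + α)) - r := by
              linarith
            have step2 := mul_le_mul_of_nonneg_left step (show (0:ℝ) ≤ (k:ℝ)+1 by positivity)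
            have e1 : ((k:ℝ)+1) * (U' (tk k * (V ω + α)) * (tk k * (V ω + α)))
                = U' (tk k * (V ω + α)) * (V ω + α) := by
              calc ((k:ℝ)+1) * (U' (tk k * (V ω + α)) * (tk k * (V ω + α)))
                  = (((k:ℝ)+1) * tk k) * (U' (tk k * (V ω + α)) * (V ω + α)) := by ring
                _ = 1 * (U' (tk k * (V ω + α)) * (V ω + α)) := by rw [htkinv k]
                _ = _ := one_mul _
            rw [e1] at step2
            have step3 : cM / (M + α) * (M + α) ≤ U' (tk k * (V ω + α)) * (V ω + α) :=
              mul_le_mul hk hwM hMα.le hU'pos.le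
            rw [div_mul_cancel₀ _ hMα.ne'] at step3
            simp only [hDk_def, hXeq k, hGsω]
            linarith
          · have ha : 0 < Vstar ω := lt_of_le_of_ne (hVsnn ω) (Ne.symm h0)
            have hGsω : Gs ω = U (Vstar ω) := if_neg h0
            have hd : M + α - K ≤ (V ω + α) - Vstar ω := by linarith
            have hd0 : 0 < (V ω + α) - Vstar ω := by linarith
            have hXa : ∀ k, Xk k ω = Vstar ω + tk k * ((V ω + α) - Vstar ω) := fun k => by
              simp only [hXk_def]; ring
            have htendX' : Tendsto (fun k => Xk k ω) atTop (𝓝[Set.Ioi 0] (Vstar ω)) := by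
              apply tendsto_nhdsWithin_of_tendsto_nhds_of_eventually_within
              · have h1 : Tendsto (fun k => Vstar ω + tk k * ((V ω + α) - Vstar ω)) atTop
                    (𝓝 (Vstar ω + 0 * ((V ω + α) - Vstar ω))) :=
                  tendsto_const_nhds.add (htklim.mul_const _)
                have h2 : Tendsto (fun k => Vstar ω + tk k * ((V ω + α) - Vstar ω)) atTop
                    (𝓝 (Vstar ω)) := by simpa using h1
                exact Tendsto.congr (fun k => (hXa k).symm) h2
              · exact Filter.Eventually.of_forall fun k => Set.mem_Ioi.2 (hXpos k ω)
            have htendU' : Tendsto (fun k => U' (Xk k ω)) atTop (𝓝 (U' (Vstar ω))) :=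
              ((hU'cont _ (Set.mem_Ioi.2 ha)).tendsto).comp htendX'
            have hUaq : q ≤ U' (Vstar ω) := bip_Up_anti hderiv hcc ha hK0 hωK
            have hev2 : ∀ᶠ k in atTop, q/2 < U' (Xk k ω) :=
              htendU'.eventually (eventually_gt_nhds (by linarith))
            filter_upwards [hev2] with k hk
            have htan := bip_tangent_le hderiv hcc (hXpos k ω) ha
            -- U (Vstar ω) ≤ U (Xk k ω) + U' (Xk k ω) * (Vstar ω - Xk k ω)
            have hsub : Vstar ω - Xk k ω = -(tk k * ((V ω + α) - Vstar ω)) := by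
              rw [hXa k]; ring
            have step : U' (Xk k ω) * (tk k * ((V ω + α) - Vstar ω)) ≤ U (Xk k ω) - U (Vstar ω) := by
              rw [hsub] at htan
              linarith
            have step2 := mul_le_mul_of_nonneg_left step (show (0:ℝ) ≤ (k:ℝ)+1 by positivity)
            have e1 : ((k:ℝ)+1) * (U' (Xk k ω) * (tk k * ((V ω + α) - Vstar ω)))
                = U' (Xk k ω) * ((V ω + α) - Vstar ω) := by
              calc ((k:ℝ)+1) * (U' (Xk k ω) * (tk k * ((V ω + α) - Vstar ω)))
                  = (((k:ℝ)+1) * tk k) * (U' (Xk k ω) * ((V ω + α) - Vstar ω)) := by ring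
                _ = 1 * (U' (Xk k ω) * ((V ω + α) - Vstar ω)) := by rw [htkinv k]
                _ = _ := one_mul _
            rw [e1] at step2
            have hU'pos : 0 < U' (Xk k ω) := bip_Up_pos hderiv hcc hmono (hXpos k ω)
            have step3 : q/2 * (M + α - K) ≤ U' (Xk k ω) * ((V ω + α) - Vstar ω) :=
              mul_le_mul hk.le hd (by linarith) hU'pos.le
            simp only [hDk_def, hGsω]
            have : cM = q/2 * (M + α - K) := rfl
            linarith
        filter_upwards [hev] with k hk
        apply ENNReal.ofReal_le_ofReal
        rw [Set.indicator_of_mem hωS]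
        linarith [hg0_nn ω]
      · rw [Set.indicator_of_notMem hωS]
        exact zero_le
    calc ENNReal.ofReal cM * P S
        = ∫⁻ ω, S.indicator (fun _ => ENNReal.ofReal cM) ω ∂P := by
          rw [lintegral_indicator hSm, setLIntegral_const]
      _ ≤ ∫⁻ ω, liminf (fun k => ENNReal.ofReal (S.indicator (Dk k) ω + g0 ω)) atTop ∂P := hmain
      _ ≤ liminf (fun k => ∫⁻ ω, ENNReal.ofReal (S.indicator (Dk k) ω + g0 ω) ∂P) atTop :=
          lintegral_liminf_le hF_meas
      _ ≤ ENNReal.ofReal (2*c₁) := by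
          have hle : liminf (fun k => ∫⁻ ω, ENNReal.ofReal (S.indicator (Dk k) ω + g0 ω) ∂P) atTop
              ≤ liminf (fun _ : ℕ => ENNReal.ofReal (2*c₁)) atTop :=
            liminf_le_liminf (Filter.Eventually.of_forall hint_bound)
          rwa [liminf_const] at hle
  have hPS : P S ≤ ENNReal.ofReal (ε/2) := by
    have h1 : P S ≤ ENNReal.ofReal (2*c₁) / ENNReal.ofReal cM := by
      rw [ENNReal.le_div_iff_mul_le (Or.inl (ENNReal.ofReal_pos.2 hcM0).ne')
        (Or.inl ENNReal.ofReal_ne_top), mul_comm]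
      exact hFatou
    rw [← ENNReal.ofReal_div_of_pos hcM0] at h1
    exact le_trans h1 (ENNReal.ofReal_le_ofReal hfinal_div)
  have hsub : {ω | M ≤ |V ω|} ⊆ S ∪ {ω | K < Vstar ω} := by
    intro ω hω
    rw [Set.mem_setOf_eq, abs_of_nonneg (hVnn ω)] at hω
    by_cases hK : Vstar ω ≤ K
    · exact Or.inl ⟨hK, hω⟩
    · exact Or.inr (lt_of_not_ge hK)
  calc P {ω | M ≤ |V ω|} ≤ P (S ∪ {ω | K < Vstar ω}) := measure_mono hsub
    _ ≤ P S + P {ω | K < Vstar ω} := measure_union_le _ _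
    _ ≤ ENNReal.ofReal (ε/2) + ENNReal.ofReal (ε/2) := add_le_add hPS hPK
    _ = ENNReal.ofReal ε := by
        rw [← ENNReal.ofReal_add (by linarith) (by linarith)]
        norm_num
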